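/- arXiv:0806.3534 — 5 statements merged into one kernel-verified Lean document; each statement's English description precedes it below -/
import Mathlib

section
/- Let n > 2 and fix signs ε₁,…,ε_{n+1} ∈ {+1,−1}. The alternating n-linear bracket on ℝ^{n+1} defined on the standard basis by [e₁,…,ê_i,…,e_{n+1}] = (−1)^i ε_i e_i (hat denoting omission) satisfies the n-Jacobi identity, and the diagonal symmetric bilinear form b(e_i,e_j) = ε_i δ_{ij} is nondegenerate and invariant, i.e. b([x₁,…,x_{n−1},y₁],y₂) = −b([x₁,…,x_{n−1},y₂],y₁) for all arguments. In particular this simple real Lie n-algebra admits an invariant inner product of signature determined by the signs ε_i. -/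
open scoped BigOperators

section NLiePreamble

variable {n : ℕ} {V : Type*} [AddCommGroup V] [Module ℝ V]

def IsNJacobi (Φ : V [⋀^Fin n]→ₗ[ℝ] V) : Prop :=
  ∀ (x : Fin n → V) (i : Fin n) (y : Fin n → V),
    Φ (Function.update x i (Φ y)) =
      ∑ j : Fin n, Φ (Function.update y j (Φ (Function.update x i (y j))))

def IsIdealN (Φ : V [⋀^Fin n]→ₗ[ℝ] V) (I : Submodule ℝ V) : Prop :=
  ∀ (y : Fin n → V) (i : Fin n), y i ∈ I → Φ y ∈ I

def IsSubalgebraN (Φ : V [⋀^Fin n]→ₗ[ℝ] V) (W : Submodule ℝ V) : Prop :=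
  ∀ y : Fin n → V, (∀ i, y i ∈ W) → Φ y ∈ W

def IsSimpleN (Φ : V [⋀^Fin n]→ₗ[ℝ] V) : Prop :=
  1 < Module.finrank ℝ V ∧ ∀ I : Submodule ℝ V, IsIdealN Φ I → I = ⊥ ∨ I = ⊤

def bracketSpanN (Φ : V [⋀^Fin n]→ₗ[ℝ] V) (W : Submodule ℝ V) : Submodule ℝ V :=
  Submodule.span ℝ {z | ∃ y : Fin n → V, (∀ i, y i ∈ W) ∧ Φ y = z}

def derivedSeriesN (Φ : V [⋀^Fin n]→ₗ[ℝ] V) (I : Submodule ℝ V) : ℕ → Submodule ℝ V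
  | 0 => I
  | (k+1) => bracketSpanN Φ (derivedSeriesN Φ I k)

def IsSolvableN (Φ : V [⋀^Fin n]→ₗ[ℝ] V) (I : Submodule ℝ V) : Prop :=
  ∃ s, derivedSeriesN Φ I s = ⊥

def IsRadicalN (Φ : V [⋀^Fin n]→ₗ[ℝ] V) (R : Submodule ℝ V) : Prop :=
  IsIdealN Φ R ∧ IsSolvableN Φ R ∧
    ∀ I : Submodule ℝ V, IsIdealN Φ I → IsSolvableN Φ I → I ≤ R

def IsSemisimpleN (Φ : V [⋀^Fin n]→ₗ[ℝ] V) : Prop :=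
  ∀ I : Submodule ℝ V, IsIdealN Φ I → IsSolvableN Φ I → I = ⊥

def IsDerivationN (Φ : V [⋀^Fin n]→ₗ[ℝ] V) (D : V →ₗ[ℝ] V) : Prop :=
  ∀ y : Fin n → V, D (Φ y) = ∑ i : Fin n, Φ (Function.update y i (D (y i)))

def adMapN (Φ : V [⋀^Fin n]→ₗ[ℝ] V) (x : Fin n → V) (i : Fin n) : V →ₗ[ℝ] V where
  toFun z := Φ (Function.update x i z)
  map_add' a b := by simp
  map_smul' c a := by simp

def centerN (Φ : V [⋀^Fin n]→ₗ[ℝ] V) : Submodule ℝ V where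
  carrier := {z | ∀ (y : Fin n → V) (i : Fin n), Φ (Function.update y i z) = 0}
  add_mem' := by
    intro a b ha hb y i
    simp [ha y i, hb y i]
  zero_mem' := by
    intro y i
    simp
  smul_mem' := by
    intro c a ha y i
    simp [ha y i]

def IsInvariantN (Φ : V [⋀^Fin n]→ₗ[ℝ] V) (b : LinearMap.BilinForm ℝ V) : Prop :=
  ∀ (x : Fin n → V) (i : Fin n) (y₁ y₂ : V),
    b (Φ (Function.update x i y₁)) y₂ = - b (Φ (Function.update x i y₂)) y₁

def perpN (b : LinearMap.BilinForm ℝ V) (W : Submodule ℝ V) : Submodule ℝ V where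
  carrier := {v | ∀ w ∈ W, b v w = 0}
  add_mem' := by
    intro a c ha hc w hw
    simp [ha w hw, hc w hw]
  zero_mem' := by
    intro w hw
    simp
  smul_mem' := by
    intro r a ha w hw
    simp [ha w hw]

def IsNondegN (b : LinearMap.BilinForm ℝ V) : Prop :=
  ∀ v : V, (∀ w : V, b v w = 0) → v = 0

def IsSymmN (b : LinearMap.BilinForm ℝ V) : Prop := ∀ v w : V, b v w = b w v

def IsDecomposableN (Φ : V [⋀^Fin n]→ₗ[ℝ] V) (b : LinearMap.BilinForm ℝ V) : Prop :=
  ∃ W₁ W₂ : Submodule ℝ V, W₁ ≠ ⊥ ∧ W₂ ≠ ⊥ ∧ IsCompl W₁ W₂ ∧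
    IsSubalgebraN Φ W₁ ∧ IsSubalgebraN Φ W₂ ∧
    (∀ v ∈ W₁, ∀ w ∈ W₂, b v w = 0) ∧
    (∀ (y : Fin n → V) (i j : Fin n), i ≠ j → y i ∈ W₁ → y j ∈ W₂ → Φ y = 0)

def IsIndecomposableN (Φ : V [⋀^Fin n]→ₗ[ℝ] V) (b : LinearMap.BilinForm ℝ V) : Prop :=
  0 < Module.finrank ℝ V ∧ ¬ IsDecomposableN Φ b

end NLiePreamble

section AuxNLie

open Matrix Function

variable {m : ℕ}

private lemma aux_swap_cons (a b : Fin (m + 1) → ℝ) (x : Fin m → (Fin (m + 1) → ℝ)) (k : Fin m) :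
    (Fin.cons a (Function.update x k b) : Fin (m + 1) → (Fin (m + 1) → ℝ)) ∘ Equiv.swap 0 k.succ
      = Fin.cons b (Function.update x k a) := by
  funext r
  rcases eq_or_ne r 0 with rfl | h0
  · rw [Function.comp_apply, Equiv.swap_apply_left, Fin.cons_succ, Function.update_self,
      Fin.cons_zero]
  · rcases eq_or_ne r k.succ with rfl | hk
    · rw [Function.comp_apply, Equiv.swap_apply_right, Fin.cons_zero, Fin.cons_succ,
        Function.update_self]
    · rw [Function.comp_apply, Equiv.swap_apply_of_ne_of_ne h0 hk]
      obtain ⟨j, rfl⟩ := Fin.eq_succ_of_ne_zero h0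
      have hjk : j ≠ k := fun h => hk (by rw [h])
      simp [Fin.cons_succ, Function.update_of_ne hjk]

/-- The alternating map `v ↦ ∑ r, det (update v r (A (v r)))`. -/
private noncomputable def Lmap (A : (Fin (m + 1) → ℝ) →ₗ[ℝ] (Fin (m + 1) → ℝ)) :
    (Fin (m + 1) → ℝ) [⋀^Fin (m + 1)]→ₗ[ℝ] ℝ where
  toFun v := ∑ r : Fin (m + 1), Matrix.detRowAlternating (Function.update v r (A (v r)))
  map_update_add' := by
    intro dec v s a b
    obtain rfl := Subsingleton.elim dec (instDecidableEqFin (m + 1))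
    show (∑ r : Fin (m + 1), Matrix.detRowAlternating
        (Function.update (Function.update v s (a + b)) r (A ((Function.update v s (a + b)) r))))
      = (∑ r : Fin (m + 1), Matrix.detRowAlternating
          (Function.update (Function.update v s a) r (A ((Function.update v s a) r))))
        + ∑ r : Fin (m + 1), Matrix.detRowAlternating
            (Function.update (Function.update v s b) r (A ((Function.update v s b) r)))
    have key : ∀ (c : Fin (m + 1) → ℝ) (r : Fin (m + 1)), r ≠ s →
        Function.update (Function.update v s c) r (A ((Function.update v s c) r))
          = Function.update (Function.update v r (A (v r))) s c := by
      intro c r hrs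
      rw [Function.update_of_ne hrs, Function.update_comm hrs]
    rw [← Finset.add_sum_erase _ _ (Finset.mem_univ s),
        ← Finset.add_sum_erase _ _ (Finset.mem_univ s),
        ← Finset.add_sum_erase _ _ (Finset.mem_univ s)]
    have hs : ∀ c : Fin (m + 1) → ℝ,
        Function.update (Function.update v s c) s (A ((Function.update v s c) s))
          = Function.update v s (A c) := by
      intro c; rw [Function.update_self, Function.update_idem]
    rw [hs, hs, hs, map_add, (Matrix.detRowAlternating).map_update_add]
    have herase : ∀ c : Fin (m + 1) → ℝ,
        ∑ r ∈ Finset.univ.erase s,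
            Matrix.detRowAlternating (Function.update (Function.update v s c) r
              (A ((Function.update v s c) r)))
          = ∑ r ∈ Finset.univ.erase s,
            Matrix.detRowAlternating (Function.update (Function.update v r (A (v r))) s c) := by
      intro c
      refine Finset.sum_congr rfl fun r hr => ?_
      rw [key c r (Finset.ne_of_mem_erase hr)]
    rw [herase, herase, herase]
    have : ∀ r ∈ Finset.univ.erase s,
        Matrix.detRowAlternating (Function.update (Function.update v r (A (v r))) s (a + b))
          = Matrix.detRowAlternating (Function.update (Function.update v r (A (v r))) s a)
            + Matrix.detRowAlternating (Function.update (Function.update v r (A (v r))) s b) := by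
      intro r _
      exact (Matrix.detRowAlternating).map_update_add _ _ _ _
    rw [Finset.sum_congr rfl this, Finset.sum_add_distrib]
    ring
  map_update_smul' := by
    intro dec v s c a
    obtain rfl := Subsingleton.elim dec (instDecidableEqFin (m + 1))
    show (∑ r : Fin (m + 1), Matrix.detRowAlternating
        (Function.update (Function.update v s (c • a)) r (A ((Function.update v s (c • a)) r))))
      = c • ∑ r : Fin (m + 1), Matrix.detRowAlternating
          (Function.update (Function.update v s a) r (A ((Function.update v s a) r)))
    have key : ∀ (u : Fin (m + 1) → ℝ) (r : Fin (m + 1)), r ≠ s →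
        Function.update (Function.update v s u) r (A ((Function.update v s u) r))
          = Function.update (Function.update v r (A (v r))) s u := by
      intro u r hrs
      rw [Function.update_of_ne hrs, Function.update_comm hrs]
    rw [← Finset.add_sum_erase _ _ (Finset.mem_univ s),
        ← Finset.add_sum_erase _ _ (Finset.mem_univ s)]
    have hs : ∀ u : Fin (m + 1) → ℝ,
        Function.update (Function.update v s u) s (A ((Function.update v s u) s))
          = Function.update v s (A u) := by
      intro u; rw [Function.update_self, Function.update_idem]
    rw [hs, hs, A.map_smul, (Matrix.detRowAlternating).map_update_smul]
    have herase : ∀ u : Fin (m + 1) → ℝ,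
        ∑ r ∈ Finset.univ.erase s,
            Matrix.detRowAlternating (Function.update (Function.update v s u) r
              (A ((Function.update v s u) r)))
          = ∑ r ∈ Finset.univ.erase s,
            Matrix.detRowAlternating (Function.update (Function.update v r (A (v r))) s u) := by
      intro u
      refine Finset.sum_congr rfl fun r hr => ?_
      rw [key u r (Finset.ne_of_mem_erase hr)]
    rw [herase, herase]
    have : ∀ r ∈ Finset.univ.erase s,
        Matrix.detRowAlternating (Function.update (Function.update v r (A (v r))) s (c • a))
          = c • Matrix.detRowAlternating (Function.update (Function.update v r (A (v r))) s a) := by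
      intro r _
      exact (Matrix.detRowAlternating).map_update_smul _ _ _ _
    rw [Finset.sum_congr rfl this, ← Finset.smul_sum, smul_add]
  map_eq_zero_of_eq' := by
    intro v p q h hpq
    show (∑ r : Fin (m + 1), Matrix.detRowAlternating (Function.update v r (A (v r)))) = 0
    have hq : q ∈ Finset.univ.erase p := Finset.mem_erase.2 ⟨Ne.symm hpq, Finset.mem_univ q⟩
    rw [← Finset.add_sum_erase _ _ (Finset.mem_univ p), ← Finset.add_sum_erase _ _ hq]
    have hz : ∀ r ∈ (Finset.univ.erase p).erase q,
        Matrix.detRowAlternating (Function.update v r (A (v r))) = 0 := by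
      intro r hr
      have hrq : r ≠ q := (Finset.mem_erase.1 hr).1
      have hrp : r ≠ p := (Finset.mem_erase.1 (Finset.mem_erase.1 hr).2).1
      refine (Matrix.detRowAlternating).map_eq_zero_of_eq _ ?_ hpq
      rw [Function.update_of_ne (Ne.symm hrp), Function.update_of_ne (Ne.symm hrq), h]
    rw [Finset.sum_eq_zero hz, add_zero]
    have hswap : Function.update v q (A (v q))
        = (Function.update v p (A (v p))) ∘ Equiv.swap p q := by
      funext r
      rcases eq_or_ne r p with rfl | hrp
      · rw [Function.comp_apply, Equiv.swap_apply_left, Function.update_of_ne (Ne.symm hpq),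
          Function.update_of_ne hpq, h]
      · rcases eq_or_ne r q with rfl | hrq
        · rw [Function.comp_apply, Equiv.swap_apply_right, Function.update_self,
            Function.update_self, h]
        · rw [Function.comp_apply, Equiv.swap_apply_of_ne_of_ne hrp hrq,
            Function.update_of_ne hrq, Function.update_of_ne hrp]
    have hsw := (Matrix.detRowAlternating).map_swap (Function.update v p (A (v p))) hpq
    rw [hswap, hsw]
    ring

private lemma det_update_basis (idx : Fin (m + 1) → Fin (m + 1)) (hinj : Function.Injective idx)
    (r : Fin (m + 1)) (w : Fin (m + 1) → ℝ) :
    Matrix.detRowAlternating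
        (Function.update (fun s => (Pi.single (idx s) 1 : Fin (m + 1) → ℝ)) r w)
      = w (idx r) * Matrix.detRowAlternating
          (fun s => (Pi.single (idx s) 1 : Fin (m + 1) → ℝ)) := by
  classical
  have hw : w = ∑ p : Fin (m + 1), w p • (Pi.single p 1 : Fin (m + 1) → ℝ) := by
    funext j
    rw [Finset.sum_apply]
    rw [Fintype.sum_eq_single j (fun p hp => by simp [Pi.single_apply, Ne.symm hp])]
    simp
  conv_lhs => rw [hw]
  rw [(Matrix.detRowAlternating).map_update_sum]
  have hsurj : Function.Surjective idx := (Finite.injective_iff_surjective_of_equiv (Equiv.refl _)).1 hinj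
  rw [Fintype.sum_eq_single (idx r)]
  · rw [(Matrix.detRowAlternating).map_update_smul]
    congr 1
    · rw [Function.update_eq_self]
  · intro p hp
    obtain ⟨s, rfl⟩ := hsurj p
    have hsr : s ≠ r := fun h => hp (by rw [h])
    rw [(Matrix.detRowAlternating).map_update_smul]
    have : Matrix.detRowAlternating
        (Function.update (fun s => (Pi.single (idx s) 1 : Fin (m + 1) → ℝ)) r
          (Pi.single (idx s) 1)) = 0 := by
      refine (Matrix.detRowAlternating).map_eq_zero_of_eq _ ?_ hsr
      rw [Function.update_of_ne hsr, Function.update_self]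
    rw [this, smul_zero]

private lemma sum_det_update_eq_zero (A : (Fin (m + 1) → ℝ) →ₗ[ℝ] (Fin (m + 1) → ℝ))
    (hA : ∀ p : Fin (m + 1), A (Pi.single p 1) p = 0) (v : Fin (m + 1) → (Fin (m + 1) → ℝ)) :
    ∑ r : Fin (m + 1), Matrix.detRowAlternating (Function.update v r (A (v r))) = 0 := by
  have hL : Lmap A = (0 : (Fin (m + 1) → ℝ) [⋀^Fin (m + 1)]→ₗ[ℝ] ℝ) := by
    classical
    refine Module.Basis.ext_alternating (Pi.basisFun ℝ (Fin (m + 1))) fun idx hinj => ?_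
    have hbasis : (fun s => (Pi.basisFun ℝ (Fin (m + 1))) (idx s))
        = fun s => (Pi.single (idx s) 1 : Fin (m + 1) → ℝ) := by
      funext s; rw [Pi.basisFun_apply]
    rw [hbasis]
    show ∑ r : Fin (m + 1), Matrix.detRowAlternating
        (Function.update (fun s => (Pi.single (idx s) 1 : Fin (m + 1) → ℝ)) r
          (A (Pi.single (idx r) 1))) = 0
    refine Finset.sum_eq_zero fun r _ => ?_
    rw [det_update_basis idx hinj r (A (Pi.single (idx r) 1)), hA (idx r), zero_mul]
  have := congrArg (fun F => F v) hL
  simpa [Lmap] using this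

end AuxNLie

/-- for `n > 2` and signs `ε i ∈ {+1,-1}`, the alternating `n`-linear
bracket on `ℝ^{n+1}` defined on the standard basis by
`[e₁,…,êᵢ,…,e_{n+1}] = (−1)ⁱ εᵢ eᵢ` (0-based indices, sign `(−1)^{i+1}`)
satisfies the `n`-Jacobi identity, and the diagonal bilinear form
`b(v,w) = Σᵢ εᵢ vᵢ wᵢ` is symmetric, nondegenerate and invariant. -/
theorem simple_nLie_bracket_jacobi_and_invariant_form
    (n : ℕ) (hn : 2 < n) (ε : Fin (n + 1) → ℝ) (hε : ∀ i, ε i = 1 ∨ ε i = -1) :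
    ∃ Φ : (Fin (n + 1) → ℝ) [⋀^Fin n]→ₗ[ℝ] (Fin (n + 1) → ℝ),
      (∀ i : Fin (n + 1),
        Φ (fun j => (Pi.single (i.succAbove j) (1 : ℝ) : Fin (n + 1) → ℝ)) =
          ((-1 : ℝ) ^ ((i : ℕ) + 1) * ε i) • (Pi.single i (1 : ℝ) : Fin (n + 1) → ℝ)) ∧
      IsNJacobi Φ ∧
      (∀ v w : Fin (n + 1) → ℝ,
        (∑ i, ε i * v i * w i) = ∑ i, ε i * w i * v i) ∧
      (∀ v : Fin (n + 1) → ℝ, (∀ w : Fin (n + 1) → ℝ, (∑ i, ε i * v i * w i) = 0) → v = 0) ∧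
      (∀ (x : Fin n → (Fin (n + 1) → ℝ)) (k : Fin n) (y₁ y₂ : Fin (n + 1) → ℝ),
        (∑ i, ε i * Φ (Function.update x k y₁) i * y₂ i) =
          - ∑ i, ε i * Φ (Function.update x k y₂) i * y₁ i) := by
  have hε2 : ∀ i, ε i * ε i = 1 := by
    intro i; rcases hε i with h | h <;> rw [h] <;> norm_num
  have hεne : ∀ i, ε i ≠ 0 := by
    intro i; rcases hε i with h | h <;> rw [h] <;> norm_num
  have hdd : ∀ {k : ℕ} (M : Fin k → Fin k → ℝ),
      Matrix.det (Matrix.of M) = Matrix.detRowAlternating M := fun _ => rfl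
  set Φ : (Fin (n + 1) → ℝ) [⋀^Fin n]→ₗ[ℝ] (Fin (n + 1) → ℝ) :=
    AlternatingMap.pi fun i => (((-1 : ℝ) ^ ((i : ℕ) + 1) * ε i) •
      ((Matrix.detRowAlternating : (Fin n → ℝ) [⋀^Fin n]→ₗ[ℝ] ℝ).compLinearMap
        (LinearMap.funLeft ℝ ℝ i.succAbove))) with hΦdef
  have hΦapp : ∀ (x : Fin n → (Fin (n + 1) → ℝ)) (i : Fin (n + 1)),
      Φ x i = ((-1 : ℝ) ^ ((i : ℕ) + 1) * ε i) *
        Matrix.detRowAlternating (fun j => (x j) ∘ i.succAbove) := by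
    intro x i
    rw [hΦdef]
    simp only [AlternatingMap.pi_apply, AlternatingMap.smul_apply, smul_eq_mul,
      AlternatingMap.compLinearMap_apply]
    congr 1
  have hkey : ∀ (x : Fin n → (Fin (n + 1) → ℝ)) (w : Fin (n + 1) → ℝ),
      (∑ i, ε i * Φ x i * w i) =
        - Matrix.detRowAlternating (Fin.cons w x : Fin (n + 1) → (Fin (n + 1) → ℝ)) := by
    intro x w
    have h2 : ∀ jj : Fin (n + 1),
        Matrix.det ((Matrix.of (Fin.cons w x : Fin (n + 1) → (Fin (n + 1) → ℝ))).submatrix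
            Fin.succ jj.succAbove)
          = Matrix.detRowAlternating (fun a => (x a) ∘ jj.succAbove) := by
      intro jj
      have hsub : ((Matrix.of (Fin.cons w x : Fin (n + 1) → (Fin (n + 1) → ℝ))).submatrix
            Fin.succ jj.succAbove)
          = Matrix.of (fun a => (x a) ∘ jj.succAbove) := by
        ext a b
        simp [Matrix.submatrix_apply, Fin.cons_succ, Function.comp]
      rw [hsub, hdd]
    have h3 : Matrix.detRowAlternating (Fin.cons w x : Fin (n + 1) → (Fin (n + 1) → ℝ))
        = ∑ jj : Fin (n + 1), (-1 : ℝ) ^ (jj : ℕ) * w jj *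
            Matrix.detRowAlternating (fun a => (x a) ∘ jj.succAbove) := by
      rw [← hdd (Fin.cons w x : Fin (n + 1) → (Fin (n + 1) → ℝ)), Matrix.det_succ_row_zero]
      refine Finset.sum_congr rfl fun jj _ => ?_
      rw [h2 jj]
      simp [Matrix.of_apply, Fin.cons_zero]
    rw [h3, ← Finset.sum_neg_distrib]
    refine Finset.sum_congr rfl fun i _ => ?_
    rw [hΦapp x i, pow_succ]
    have hr : ε i * (((-1 : ℝ) ^ (i : ℕ) * -1 * ε i) *
          Matrix.detRowAlternating (fun j => (x j) ∘ i.succAbove)) * w i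
        = (ε i * ε i) * (-((-1 : ℝ) ^ (i : ℕ) * w i *
            Matrix.detRowAlternating (fun j => (x j) ∘ i.succAbove))) := by ring
    rw [hr, hε2 i, one_mul]
  have hnd : ∀ v : Fin (n + 1) → ℝ,
      (∀ w : Fin (n + 1) → ℝ, (∑ i, ε i * v i * w i) = 0) → v = 0 := by
    intro v hv
    funext j
    have h := hv (Pi.single j 1)
    rw [Fintype.sum_eq_single j (fun i hij => by
      rw [Pi.single_eq_of_ne hij, mul_zero])] at h
    rw [Pi.single_eq_same, mul_one] at h
    have := mul_eq_zero.1 h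
    rcases this with h' | h'
    · exact absurd h' (hεne j)
    · exact h'
  have hinv : ∀ (x : Fin n → (Fin (n + 1) → ℝ)) (k : Fin n) (y₁ y₂ : Fin (n + 1) → ℝ),
      (∑ i, ε i * Φ (Function.update x k y₁) i * y₂ i) =
        - ∑ i, ε i * Φ (Function.update x k y₂) i * y₁ i := by
    intro x k y₁ y₂
    rw [hkey, hkey]
    have h0k : (0 : Fin (n + 1)) ≠ k.succ := (Fin.succ_ne_zero k).symm
    have hsw := (Matrix.detRowAlternating (R := ℝ) (n := Fin (n + 1))).map_swap
      (Fin.cons y₂ (Function.update x k y₁)) h0k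
    rw [aux_swap_cons] at hsw
    rw [hsw]
    ring
  refine ⟨Φ, ?_, ?_, fun v w => Finset.sum_congr rfl fun i _ => by ring, hnd, hinv⟩
  · -- basis values
    intro i
    funext i'
    rw [hΦapp]
    rcases eq_or_ne i' i with rfl | hne
    · have hM : (fun j => (Pi.single (i'.succAbove j) (1 : ℝ) : Fin (n + 1) → ℝ) ∘ i'.succAbove)
          = fun j k => (1 : Matrix (Fin n) (Fin n) ℝ) j k := by
        funext j k
        by_cases h : k = j
        · subst h
          simp [Function.comp, Matrix.one_apply_eq]
        · have hne' : i'.succAbove k ≠ i'.succAbove j :=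
            fun hh => h (Fin.succAbove_right_injective hh)
          simp [Function.comp, Pi.single_eq_of_ne hne', Matrix.one_apply_ne (Ne.symm h)]
      rw [hM]
      have h1 : Matrix.detRowAlternating (fun j k => (1 : Matrix (Fin n) (Fin n) ℝ) j k)
          = Matrix.det (1 : Matrix (Fin n) (Fin n) ℝ) := rfl
      rw [h1, Matrix.det_one, mul_one]
      simp [Pi.smul_apply, Pi.single_eq_same, smul_eq_mul]
    · obtain ⟨j₀, hj₀⟩ := Fin.exists_succAbove_eq hne
      have hz : (fun j => (Pi.single (i.succAbove j) (1 : ℝ) : Fin (n + 1) → ℝ) ∘ i'.succAbove) j₀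
          = 0 := by
        funext kk
        have hne' : i'.succAbove kk ≠ i.succAbove j₀ := by
          rw [hj₀]; exact Fin.succAbove_ne i' kk
        simp [Function.comp, Pi.single_eq_of_ne hne']
      rw [(Matrix.detRowAlternating).map_coord_zero j₀ hz, mul_zero]
      simp [Pi.smul_apply, Pi.single_eq_of_ne hne, smul_eq_mul]
  · -- Jacobi
    intro x i y
    set A : (Fin (n + 1) → ℝ) →ₗ[ℝ] (Fin (n + 1) → ℝ) := adMapN Φ x i with hAdef
    have hA : ∀ z, A z = Φ (Function.update x i z) := fun _ => rfl
    have hdiag : ∀ p : Fin (n + 1), A (Pi.single p 1) p = 0 := by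
      intro p
      have h := hinv x i (Pi.single p 1) (Pi.single p 1)
      have h0 : (∑ j, ε j * Φ (Function.update x i (Pi.single p 1)) j *
          (Pi.single p (1 : ℝ) : Fin (n + 1) → ℝ) j) = 0 := by
        linarith [h]
      rw [Fintype.sum_eq_single p (fun j hj => by
        rw [Pi.single_eq_of_ne hj, mul_zero])] at h0
      rw [Pi.single_eq_same, mul_one] at h0
      rw [hA]
      rcases mul_eq_zero.1 h0 with h' | h'
      · exact absurd h' (hεne p)
      · exact h'
    have hmain : ∀ w : Fin (n + 1) → ℝ,
        (∑ j, ε j * (Φ (Function.update x i (Φ y))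
            - ∑ k : Fin n, Φ (Function.update y k (Φ (Function.update x i (y k))))) j * w j)
          = 0 := by
      intro w
      have hsplit : (∑ j, ε j * (Φ (Function.update x i (Φ y))
            - ∑ k : Fin n, Φ (Function.update y k (Φ (Function.update x i (y k))))) j * w j)
          = (∑ j, ε j * Φ (Function.update x i (Φ y)) j * w j)
            - ∑ k : Fin n, ∑ j, ε j * Φ (Function.update y k (Φ (Function.update x i (y k)))) j
                * w j := by
        rw [Finset.sum_comm (s := Finset.univ) (t := Finset.univ), ← Finset.sum_sub_distrib]
        refine Finset.sum_congr rfl fun j _ => ?_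
        rw [Pi.sub_apply, Finset.sum_apply]
        simp only [mul_sub, sub_mul, Finset.mul_sum, Finset.sum_mul]
      rw [hsplit]
      -- first term: skewness
      have h1 : (∑ j, ε j * Φ (Function.update x i (Φ y)) j * w j)
          = Matrix.detRowAlternating
              (Fin.cons (A w) y : Fin (n + 1) → (Fin (n + 1) → ℝ)) := by
        rw [hinv x i (Φ y) w]
        have hc : (∑ j, ε j * Φ (Function.update x i w) j * (Φ y) j)
            = ∑ j, ε j * (Φ y) j * (A w) j := by
          refine Finset.sum_congr rfl fun j _ => ?_
          rw [hA]; ring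
        rw [hc, hkey y (A w), neg_neg]
      -- second term
      have h2 : ∀ k : Fin n,
          (∑ j, ε j * Φ (Function.update y k (Φ (Function.update x i (y k)))) j * w j)
            = - Matrix.detRowAlternating
                (Fin.cons w (Function.update y k (A (y k))) : Fin (n + 1) → (Fin (n + 1) → ℝ)) := by
        intro k
        rw [← hA, hkey]
      rw [h1, Finset.sum_congr rfl fun k _ => h2 k]
      have hzero := sum_det_update_eq_zero A hdiag (Fin.cons w y)
      rw [Fin.sum_univ_succ] at hzero
      rw [Fin.cons_zero, Fin.update_cons_zero] at hzero
      have hsucc : ∀ k : Fin n,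
          Function.update (Fin.cons w y : Fin (n + 1) → (Fin (n + 1) → ℝ)) k.succ
              (A ((Fin.cons w y : Fin (n + 1) → (Fin (n + 1) → ℝ)) k.succ))
            = Fin.cons w (Function.update y k (A (y k))) := by
        intro k
        rw [Fin.cons_succ, Fin.cons_update]
      rw [Finset.sum_congr rfl fun k _ => congrArg _ (hsucc k)] at hzero
      rw [Finset.sum_neg_distrib]
      linarith [hzero]
    have := hnd _ hmain
    have heq := sub_eq_zero.1 this
    exact heq
end

section
/- Let n > 2 and let V be a finite-dimensional real Lie n-algebra with radical Rad V (its maximal solvable ideal). Then D(Rad V) ⊆ Rad V for every derivation D of V. -/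
open scoped BigOperators

section AuxRadical

variable {n : ℕ} {V : Type*} [AddCommGroup V] [Module ℝ V]

lemma bracketSpanN_mono' (Φ : V [⋀^Fin n]→ₗ[ℝ] V) {W W' : Submodule ℝ V} (h : W ≤ W') :
    bracketSpanN Φ W ≤ bracketSpanN Φ W' := by
  apply Submodule.span_mono
  rintro z ⟨y, hy, rfl⟩
  exact ⟨y, fun i => h (hy i), rfl⟩

lemma bracketSpanN_map_le' (Φ : V [⋀^Fin n]→ₗ[ℝ] V) (g : V →ₗ[ℝ] V)
    (hg : ∀ y : Fin n → V, Φ (fun i => g (y i)) = g (Φ y)) (W : Submodule ℝ V) :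
    bracketSpanN Φ (W.map g) ≤ (bracketSpanN Φ W).map g := by
  rw [bracketSpanN, Submodule.span_le]
  rintro z ⟨y, hy, rfl⟩
  choose w hw hgw using fun i => Submodule.mem_map.mp (hy i)
  refine ⟨Φ w, Submodule.subset_span ⟨w, hw, rfl⟩, ?_⟩
  rw [← hg w]
  congr 1
  exact funext hgw

lemma aut_map_radical_le (Φ : V [⋀^Fin n]→ₗ[ℝ] V) (R : Submodule ℝ V)
    (hR : IsRadicalN Φ R) (g g' : V →ₗ[ℝ] V)
    (hgg' : ∀ x, g (g' x) = x) (hg'g : ∀ x, g' (g x) = x)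
    (hg : ∀ y : Fin n → V, Φ (fun i => g (y i)) = g (Φ y)) :
    R.map g ≤ R := by
  refine hR.2.2 _ ?_ ?_
  · intro y i hyi
    obtain ⟨r, hr, hgr⟩ := Submodule.mem_map.mp hyi
    have hy' : Φ y = g (Φ (fun j => g' (y j))) := by
      rw [← hg]
      congr 1
      funext j
      rw [hgg']
    rw [hy']
    refine Submodule.mem_map_of_mem (hR.1 _ i ?_)
    show g' (y i) ∈ R
    rw [← hgr, hg'g]
    exact hr
  · obtain ⟨s, hs⟩ := hR.2.1
    refine ⟨s, le_bot_iff.mp ?_⟩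
    have key : ∀ k, derivedSeriesN Φ (R.map g) k ≤ (derivedSeriesN Φ R k).map g := by
      intro k
      induction k with
      | zero => exact le_refl _
      | succ k ih =>
        calc derivedSeriesN Φ (R.map g) (k + 1)
            = bracketSpanN Φ (derivedSeriesN Φ (R.map g) k) := rfl
          _ ≤ bracketSpanN Φ ((derivedSeriesN Φ R k).map g) := bracketSpanN_mono' Φ ih
          _ ≤ (bracketSpanN Φ (derivedSeriesN Φ R k)).map g := bracketSpanN_map_le' Φ g hg _
    have h := key s
    rwa [hs, Submodule.map_bot] at h

end AuxRadical

set_option maxHeartbeats 1000000 in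
set_option synthInstance.maxHeartbeats 400000 in
/-- the radical of a finite-dimensional real Lie `n`-algebra (`n > 2`)
is preserved by every derivation. -/
theorem derivation_preserves_radical
    (n : ℕ) (hn : 2 < n) (V : Type*) [AddCommGroup V] [Module ℝ V]
    [FiniteDimensional ℝ V]
    (Φ : V [⋀^Fin n]→ₗ[ℝ] V) (hΦ : IsNJacobi Φ)
    (R : Submodule ℝ V) (hR : IsRadicalN Φ R)
    (D : V →ₗ[ℝ] V) (hD : IsDerivationN Φ D) :
    ∀ v ∈ R, D v ∈ R := by
  classical
  intro v hv
  letI : NormedAddCommGroup V :=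
    NormedAddCommGroup.induced V (Fin (Module.finrank ℝ V) → ℝ)
      (Module.finBasis ℝ V).equivFun.toLinearMap
      (Module.finBasis ℝ V).equivFun.injective
  letI : NormedSpace ℝ V :=
    NormedSpace.induced ℝ V (Fin (Module.finrank ℝ V) → ℝ)
      (Module.finBasis ℝ V).equivFun.toLinearMap
  haveI : CompleteSpace V := FiniteDimensional.complete ℝ V
  set Dc : V →L[ℝ] V := LinearMap.toContinuousLinearMap D with hDc
  have hDcD : ∀ x : V, Dc x = D x := fun x => rfl
  set bV := Module.finBasis ℝ V with hbV
  -- Φ is continuous as a map on `Fin n → V`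
  have hcont : Continuous fun m : Fin n → V => Φ m := by
    have hrep : (fun m : Fin n → V => Φ m) = fun m =>
        ∑ k : Fin n → Fin (Module.finrank ℝ V),
          (∏ i, bV.repr (m i) (k i)) • Φ (fun i => bV (k i)) := by
      funext m
      have h1 : Φ m = Φ (fun i => ∑ j, bV.repr (m i) j • bV j) := by
        congr 1
        funext i
        exact (bV.sum_repr (m i)).symm
      rw [h1]
      rw [show Φ (fun i => ∑ j, bV.repr (m i) j • bV j)
        = Φ.toMultilinearMap (fun i => ∑ j, bV.repr (m i) j • bV j) from rfl]
      rw [Φ.toMultilinearMap.map_sum]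
      refine Finset.sum_congr rfl fun k _ => ?_
      exact Φ.toMultilinearMap.map_smul_univ _ _
    rw [hrep]
    refine continuous_finset_sum _ fun k _ => Continuous.smul ?_ continuous_const
    refine continuous_finset_prod _ fun i _ => ?_
    have hco := (bV.coord (k i)).continuous_of_finiteDimensional
    simpa [Module.Basis.coord_apply, Function.comp_def] using hco.comp (continuous_apply i)
  set Φc : ContinuousMultilinearMap ℝ (fun _ : Fin n => V) V :=
    ⟨Φ.toMultilinearMap, hcont⟩ with hΦcdef
  have hΦcΦ : ∀ m : Fin n → V, Φc m = Φ m := fun m => rfl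
  set G : ℝ → (V →L[ℝ] V) := fun t => NormedSpace.exp (t • Dc) with hG
  have hGmul : ∀ s t : ℝ, G (s + t) = G s * G t := by
    intro s t
    simp only [hG]
    rw [show (s + t) • Dc = s • Dc + t • Dc from add_smul s t Dc]
    exact NormedSpace.exp_add_of_commute_of_mem_ball (𝕂 := ℝ)
      (((Commute.refl Dc).smul_left s).smul_right t)
      ((NormedSpace.expSeries_radius_eq_top ℝ (V →L[ℝ] V)).symm ▸ edist_lt_top _ _)
      ((NormedSpace.expSeries_radius_eq_top ℝ (V →L[ℝ] V)).symm ▸ edist_lt_top _ _)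
  have hG0 : G 0 = 1 := by
    simp only [hG, zero_smul]
    exact NormedSpace.exp_zero
  have hGinv : ∀ (t : ℝ) (x : V), G t (G (-t) x) = x := by
    intro t x
    have h1 : G t * G (-t) = 1 := by rw [← hGmul, add_neg_cancel, hG0]
    calc G t (G (-t) x) = (G t * G (-t)) x := rfl
      _ = x := by rw [h1]; rfl
  have hGderiv : ∀ (t : ℝ) (x : V), HasDerivAt (fun u => G u x) (Dc (G t x)) t := by
    intro t x
    have h := hasDerivAt_exp_smul_const' (𝕂 := ℝ) Dc t
    have h2 := h.clm_apply (hasDerivAt_const t x)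
    simpa [hG, ContinuousLinearMap.mul_apply] using h2
  have hAut : ∀ (t : ℝ) (y : Fin n → V), Φ (fun i => G t (y i)) = G t (Φ y) := by
    intro t y
    have hFderiv : ∀ s : ℝ,
        HasDerivAt (fun u => G (-u) (Φc (fun i => G u (y i)))) 0 s := by
      intro s
      have hc : HasDerivAt (fun u => (fun i => G u (y i))) (fun i => Dc (G s (y i))) s :=
        hasDerivAt_pi.mpr fun i => hGderiv s (y i)
      have hΦd : HasDerivAt (fun u => Φc (fun i => G u (y i)))
          (∑ i, Φc (Function.update (fun j => G s (y j)) i (Dc (G s (y i))))) s := by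
        have h := (Φc.hasFDerivAt (x := fun j => G s (y j))).comp_hasDerivAt s hc
        rw [ContinuousMultilinearMap.linearDeriv_apply] at h
        exact h
      have hneg : HasDerivAt (fun u : ℝ => -u) (-1) s := (hasDerivAt_id s).neg
      have hout : HasDerivAt (fun u : ℝ => G (-u)) (G (-s) * (-Dc)) s := by
        have h := hasDerivAt_exp_smul_const (𝕂 := ℝ) (-Dc) s
        have heq : (fun u : ℝ => G (-u)) = fun u : ℝ => NormedSpace.exp (u • -Dc) := by
          funext u
          simp [hG, smul_neg, neg_smul]
        have heq2 : G (-s) = NormedSpace.exp (s • -Dc) := by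
          simp [hG, smul_neg, neg_smul]
        rw [heq, heq2]
        exact h
      have hcomb := hout.clm_apply hΦd
      have hDw : Dc (Φc (fun j => G s (y j)))
          = ∑ i, Φc (Function.update (fun j => G s (y j)) i (Dc (G s (y i)))) := by
        have h := hD (fun j => G s (y j))
        simp only [hΦcΦ, hDcD]
        exact h
      convert hcomb using 1
      · rfl
      · rfl
      rw [ContinuousLinearMap.mul_apply, ContinuousLinearMap.neg_apply, hDw]
      simp
    have hFconst := is_const_of_deriv_eq_zero
      (f := fun u => G (-u) (Φc (fun i => G u (y i))))
      (fun u => (hFderiv u).differentiableAt) (fun u => (hFderiv u).deriv) t 0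
    have h1 : G (-t) (Φc (fun i => G t (y i))) = Φc y := by
      rw [hFconst]
      simp [hG0, ContinuousLinearMap.one_apply]
    have h2 := congrArg (G t) h1
    rw [hGinv] at h2
    calc Φ (fun i => G t (y i)) = Φc (fun i => G t (y i)) := rfl
      _ = G t (Φc y) := h2
      _ = G t (Φ y) := rfl
  have hGR : ∀ t : ℝ, R.map ((G t).toLinearMap) ≤ R := by
    intro t
    refine aut_map_radical_le Φ R hR (G t).toLinearMap (G (-t)).toLinearMap
      (fun x => hGinv t x) ?_ (fun y => hAut t y)
    intro x
    have h := hGinv (-t) x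
    rwa [neg_neg] at h
  have key : ∀ f : Module.Dual ℝ V, f ∈ R.dualAnnihilator → f (D v) = 0 := by
    intro f hf
    have hzero : ∀ t : ℝ, f (G t v) = 0 := by
      intro t
      exact (Submodule.mem_dualAnnihilator f).mp hf _ (hGR t (Submodule.mem_map_of_mem hv))
    set fC : V →L[ℝ] ℝ := LinearMap.toContinuousLinearMap f with hfC
    have hfCf : ∀ x : V, fC x = f x := fun x => rfl
    have h1 : HasDerivAt (fun t => G t v) (Dc (G 0 v)) 0 := hGderiv 0 v
    have h2 : HasDerivAt (fun t => fC (G t v)) (fC (Dc (G 0 v))) 0 :=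
      fC.hasFDerivAt.comp_hasDerivAt 0 h1
    have h3 : (fun t : ℝ => fC (G t v)) = fun _ => (0 : ℝ) :=
      funext fun t => hzero t
    rw [h3] at h2
    have h4 := h2.unique (hasDerivAt_const 0 (0 : ℝ))
    have h5 : fC (Dc (G 0 v)) = f (D v) := by
      rw [hG0]
      rw [hfCf, hDcD]
      norm_num
    rw [← h5]
    exact h4
  have hmem : D v ∈ R.dualAnnihilator.dualCoannihilator :=
    (Submodule.mem_dualCoannihilator (D v)).mpr key
  rwa [Subspace.dualAnnihilator_dualCoannihilator_eq] at hmem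
end

section
/- Let n > 2 and let V be a metric Lie n-algebra. If I ⊴ V is a coisotropic ideal (I^⊥ ⊆ I), then the quotient I/I^⊥ is a metric Lie n-algebra: the n-bracket of V induces a well-defined n-bracket on I/I^⊥ satisfying the n-Jacobi identity, and the inner product of V induces a well-defined nondegenerate invariant symmetric bilinear form on I/I^⊥. -/
open scoped BigOperators

/-- if `I` is a coisotropic ideal (`I^⊥ ⊆ I`) of a metric Lie
`n`-algebra (`n > 2`), then `I/I^⊥` carries an induced `n`-bracket satisfying
the `n`-Jacobi identity and an induced nondegenerate invariant symmetric
bilinear form, i.e. it is a metric Lie `n`-algebra. -/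
theorem coisotropic_quotient_is_metric
    (n : ℕ) (hn : 2 < n) (V : Type*) [AddCommGroup V] [Module ℝ V]
    [FiniteDimensional ℝ V]
    (Φ : V [⋀^Fin n]→ₗ[ℝ] V) (hΦ : IsNJacobi Φ)
    (b : LinearMap.BilinForm ℝ V)
    (hsymm : IsSymmN b) (hnd : IsNondegN b) (hinv : IsInvariantN Φ b)
    (I : Submodule ℝ V) (hI : IsIdealN Φ I) (hco : perpN b I ≤ I) :
    ∃ (ΦW : (↥I ⧸ (perpN b I).comap I.subtype)
              [⋀^Fin n]→ₗ[ℝ] (↥I ⧸ (perpN b I).comap I.subtype))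
      (bW : LinearMap.BilinForm ℝ (↥I ⧸ (perpN b I).comap I.subtype)),
      (∀ (y : Fin n → ↥I) (z : ↥I), (z : V) = Φ (fun i => (y i : V)) →
        ΦW (fun i => Submodule.Quotient.mk (y i)) = Submodule.Quotient.mk z) ∧
      IsNJacobi ΦW ∧
      (∀ u v : ↥I,
        bW (Submodule.Quotient.mk u) (Submodule.Quotient.mk v) = b (u : V) (v : V)) ∧
      IsSymmN bW ∧ IsNondegN bW ∧ IsInvariantN ΦW bW := by
    classical
  set J : Submodule ℝ ↥I := (perpN b I).comap I.subtype with hJdef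
  have hmemI : ∀ y : Fin n → ↥I, (Φ.compLinearMap I.subtype) y ∈ I := by
    intro y
    exact hI (fun i => (y i : V)) ⟨0, by omega⟩ (y ⟨0, by omega⟩).2
  set ΦI : (↥I) [⋀^Fin n]→ₗ[ℝ] ↥I :=
    (Φ.compLinearMap I.subtype).codRestrict I hmemI with hΦIdef
  have hΦIcoe : ∀ y : Fin n → ↥I, ((ΦI y : ↥I) : V) = Φ (fun i => (y i : V)) := by
    intro y; rfl
  have hupd : ∀ (x : Fin n → ↥I) (i : Fin n) (a : ↥I),
      (fun k => ((Function.update x i a k : ↥I) : V)) =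
        Function.update (fun k => (x k : V)) i (a : V) := by
    intro x i a; funext k
    exact Function.apply_update (fun _ v => ((v : ↥I) : V)) x i a k
  have hJmem : ∀ jj : ↥I, jj ∈ J → ∀ w ∈ I, b (jj : V) w = 0 := by
    intro jj hjj w hw
    exact hjj w hw
  -- changing an argument of b by an element of J
  have hb0 : ∀ u w : ↥I, u - w ∈ J → ∀ v : ↥I, b (u : V) (v : V) = b (w : V) (v : V) := by
    intro u w huw v
    have h0 : b ((u - w : ↥I) : V) (v : V) = 0 := hJmem _ huw _ v.2
    rw [AddSubgroupClass.coe_sub, map_sub, LinearMap.sub_apply] at h0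
    linarith
  have hb0' : ∀ v w : ↥I, v - w ∈ J → ∀ u : ↥I, b (u : V) (v : V) = b (u : V) (w : V) := by
    intro v w hvw u
    calc b (u : V) (v : V) = b (v : V) (u : V) := hsymm _ _
      _ = b (w : V) (u : V) := hb0 v w hvw u
      _ = b (u : V) (w : V) := hsymm _ _
  -- key: bracket with one entry in J lands in J
  have keyJ : ∀ (y : Fin n → ↥I) (k : Fin n), y k ∈ J → ΦI y ∈ J := by
    intro y k hk
    intro w hw
    show b ((ΦI y : ↥I) : V) w = 0
    have h1 := hinv (fun i => (y i : V)) k ((y k : V)) w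
    rw [Function.update_eq_self] at h1
    have h2 : Φ (Function.update (fun i => (y i : V)) k w) ∈ I :=
      hI _ k (by rw [Function.update_self]; exact hw)
    have h3 : b (Φ (Function.update (fun i => (y i : V)) k w)) (y k : V) = 0 := by
      rw [hsymm]
      exact hJmem (y k) hk _ h2
    rw [hΦIcoe y, h1, h3, neg_zero]
  -- a linear section of the quotient map
  obtain ⟨s, hs⟩ := J.mkQ.exists_rightInverse_of_surjective
    (by rw [Submodule.range_mkQ])
  have hsx : ∀ q : ↥I ⧸ J, Submodule.Quotient.mk (s q) = q := by
    intro q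
    have := LinearMap.congr_fun hs q
    simpa using this
  have hsJ : ∀ u : ↥I, s (Submodule.Quotient.mk u) - u ∈ J := by
    intro u
    rw [← Submodule.Quotient.mk_eq_zero J, Submodule.Quotient.mk_sub, hsx, sub_self]
  refine ⟨J.mkQ.compAlternatingMap (ΦI.compLinearMap s), ?_⟩
  set ΦW := J.mkQ.compAlternatingMap (ΦI.compLinearMap s) with hΦWdef
  have hΦWapp : ∀ q : Fin n → (↥I ⧸ J),
      ΦW q = Submodule.Quotient.mk (ΦI (fun i => s (q i))) := by
    intro q; rfl
  -- descent lemma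
  have descend : ∀ y : Fin n → ↥I,
      ΦW (fun i => Submodule.Quotient.mk (y i)) = Submodule.Quotient.mk (ΦI y) := by
    intro y
    rw [hΦWapp]
    set j : Fin n → ↥I := fun i => s (Submodule.Quotient.mk (y i)) - y i with hjdef
    have hj : ∀ i, j i ∈ J := fun i => hsJ (y i)
    have hyj : (fun i => s (Submodule.Quotient.mk (y i))) = j + y := by
      funext i; simp [hjdef]
    rw [hyj]
    have hadd' : ΦI (j + y) = ∑ t : Finset (Fin n), ΦI (t.piecewise j y) :=
      ΦI.toMultilinearMap.map_add_univ j y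
    rw [← Submodule.mkQ_apply, hadd', map_sum]
    rw [Finset.sum_eq_single (∅ : Finset (Fin n))]
    · rw [Finset.piecewise_empty, Submodule.mkQ_apply]
    · intro t _ ht
      obtain ⟨k, hk⟩ := Finset.nonempty_iff_ne_empty.mpr ht
      have hk2 : t.piecewise j y k ∈ J := by
        rw [Finset.piecewise_eq_of_mem _ _ _ hk]; exact hj k
      rw [Submodule.mkQ_apply, Submodule.Quotient.mk_eq_zero]
      exact keyJ _ k hk2
    · intro h; exact absurd (Finset.mem_univ _) h
  -- Jacobi identity for ΦI
  have hΦI : IsNJacobi ΦI := by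
    intro x i y
    apply Subtype.ext
    have lhs : ((ΦI (Function.update x i (ΦI y)) : ↥I) : V)
        = Φ (Function.update (fun k => (x k : V)) i (Φ (fun k => (y k : V)))) := by
      rw [hΦIcoe, hupd, hΦIcoe]
    have rhs : (((∑ jj : Fin n, ΦI (Function.update y jj
        (ΦI (Function.update x i (y jj))))) : ↥I) : V)
        = ∑ jj : Fin n, Φ (Function.update (fun k => (y k : V)) jj
            (Φ (Function.update (fun k => (x k : V)) i ((y jj : V))))) := by
      rw [AddSubmonoidClass.coe_finset_sum]
      refine Finset.sum_congr rfl ?_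
      intro jj _
      rw [hΦIcoe, hupd, hΦIcoe, hupd]
    rw [lhs, rhs]
    exact hΦ (fun k => (x k : V)) i (fun k => (y k : V))
  -- descent lemma with update
  have descend' : ∀ (x' : Fin n → ↥I) (i : Fin n) (a : ↥I),
      ΦW (Function.update (fun k => Submodule.Quotient.mk (x' k)) i
        (Submodule.Quotient.mk a)) = Submodule.Quotient.mk (ΦI (Function.update x' i a)) := by
    intro x' i a
    have : Function.update (fun k => (Submodule.Quotient.mk (x' k) : ↥I ⧸ J)) i
        (Submodule.Quotient.mk a)
        = fun k => Submodule.Quotient.mk (Function.update x' i a k) := by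
      funext k
      exact (Function.apply_update (fun _ v => (Submodule.Quotient.mk v : ↥I ⧸ J)) x' i a k).symm
    rw [this]
    exact descend _
  have descend'' : ∀ (x : Fin n → ↥I ⧸ J) (i : Fin n) (a : ↥I),
      ΦW (Function.update x i (Submodule.Quotient.mk a))
        = Submodule.Quotient.mk (ΦI (Function.update (fun k => s (x k)) i a)) := by
    intro x i a
    have hx : x = fun k => Submodule.Quotient.mk (s (x k)) := funext fun k => (hsx (x k)).symm
    calc ΦW (Function.update x i (Submodule.Quotient.mk a))
        = ΦW (Function.update (fun k => Submodule.Quotient.mk (s (x k))) i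
            (Submodule.Quotient.mk a)) := by rw [← hx]
      _ = Submodule.Quotient.mk (ΦI (Function.update (fun k => s (x k)) i a)) :=
          descend' _ _ _
  refine ⟨((b.compl₁₂ I.subtype I.subtype).compl₁₂ s s : _), ?_, ?_, ?_, ?_, ?_, ?_⟩
  · -- well-definedness of the bracket
    intro y z hz
    have : z = ΦI y := Subtype.ext (by rw [hz, hΦIcoe])
    rw [this]
    exact descend y
  · -- Jacobi for ΦW
    intro x i y
    calc ΦW (Function.update x i (ΦW y))
        = Submodule.Quotient.mk (ΦI (Function.update (fun k => s (x k)) i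
            (ΦI (fun k => s (y k))))) := by
          rw [hΦWapp y, descend'']
      _ = ∑ jj : Fin n, Submodule.Quotient.mk (ΦI (Function.update (fun k => s (y k)) jj
            (ΦI (Function.update (fun k => s (x k)) i (s (y jj)))))) := by
          rw [hΦI (fun k => s (x k)) i (fun k => s (y k)), ← Submodule.mkQ_apply, map_sum]
          simp only [Submodule.mkQ_apply]
      _ = ∑ jj : Fin n, ΦW (Function.update y jj (ΦW (Function.update x i (y jj)))) := by
          refine Finset.sum_congr rfl ?_
          intro jj _
          rw [show Function.update x i (y jj)
              = Function.update x i (Submodule.Quotient.mk (s (y jj))) from by rw [hsx],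
            descend'', descend'']
  · -- bW on representatives
    intro u v
    simp only [LinearMap.compl₁₂_apply, Submodule.coe_subtype]
    calc b ((s (Submodule.Quotient.mk u) : ↥I) : V) ((s (Submodule.Quotient.mk v) : ↥I) : V)
        = b (u : V) ((s (Submodule.Quotient.mk v) : ↥I) : V) := hb0 _ _ (hsJ u) _
      _ = b (u : V) (v : V) := hb0' _ _ (hsJ v) _
  · -- symmetry
    intro q r
    simp only [LinearMap.compl₁₂_apply, Submodule.coe_subtype]
    exact hsymm _ _
  · -- nondegeneracy
    intro q hq
    have hmem2 : s q ∈ J := by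
      intro w hw
      have h4 := hq (Submodule.Quotient.mk (⟨w, hw⟩ : ↥I))
      simp only [LinearMap.compl₁₂_apply, Submodule.coe_subtype] at h4
      have h5 : b ((s q : ↥I) : V)
          ((s (Submodule.Quotient.mk (⟨w, hw⟩ : ↥I)) : ↥I) : V)
          = b ((s q : ↥I) : V) ((⟨w, hw⟩ : ↥I) : V) :=
        hb0' _ _ (hsJ ⟨w, hw⟩) _
      rw [h5] at h4
      exact h4
    rw [← hsx q, Submodule.Quotient.mk_eq_zero]
    exact hmem2
  · -- invariance
    intro x i q₁ q₂
    have h1 : ΦW (Function.update x i q₁)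
        = Submodule.Quotient.mk (ΦI (Function.update (fun k => s (x k)) i (s q₁))) := by
      have h0 := descend'' x i (s q₁); rwa [hsx q₁] at h0
    have h2 : ΦW (Function.update x i q₂)
        = Submodule.Quotient.mk (ΦI (Function.update (fun k => s (x k)) i (s q₂))) := by
      have h0 := descend'' x i (s q₂); rwa [hsx q₂] at h0
    have key : ∀ (a : ↥I) (q : ↥I ⧸ J),
        ((b.compl₁₂ I.subtype I.subtype).compl₁₂ s s)
          (Submodule.Quotient.mk a) q
        = b (a : V) ((s q : ↥I) : V) := by
      intro a q
      simp only [LinearMap.compl₁₂_apply, Submodule.coe_subtype]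
      exact hb0 _ _ (hsJ a) _
    rw [h1, h2, key, key]
    have hu := hinv (fun k => ((s (x k) : ↥I) : V)) i ((s q₁ : ↥I) : V) ((s q₂ : ↥I) : V)
    rw [hΦIcoe, hupd, hΦIcoe, hupd]
    exact hu
end

section
/- Let n > 2, let V be a metric Lie n-algebra and let I ⊴ V be an ideal. Then I^⊥ centralises I, that is, [I^⊥, I, V, …, V] = 0. -/
open scoped BigOperators

/-- in a metric Lie `n`-algebra (`n > 2`), `I^⊥` centralises the
ideal `I`: every `n`-bracket with one argument in `I^⊥` and another in `I`
vanishes. -/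
theorem perp_centralises_ideal
    (n : ℕ) (hn : 2 < n) (V : Type*) [AddCommGroup V] [Module ℝ V]
    [FiniteDimensional ℝ V]
    (Φ : V [⋀^Fin n]→ₗ[ℝ] V) (hΦ : IsNJacobi Φ)
    (b : LinearMap.BilinForm ℝ V)
    (hsymm : IsSymmN b) (hnd : IsNondegN b) (hinv : IsInvariantN Φ b)
    (I : Submodule ℝ V) (hI : IsIdealN Φ I) :
    ∀ (y : Fin n → V) (i j : Fin n), i ≠ j →
      y i ∈ perpN b I → y j ∈ I → Φ y = 0 := by
  intro y i j hij hyi hyj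
  apply hnd
  intro w
  have h1 := hinv y i (y i) w
  rw [Function.update_eq_self] at h1
  have hmem : Φ (Function.update y i w) ∈ I := by
    apply hI _ j
    rw [Function.update_of_ne (Ne.symm hij)]
    exact hyj
  have h2 : b (Φ (Function.update y i w)) (y i) = 0 := by
    rw [hsymm]; exact hyi _ hmem
  rw [h1, h2, neg_zero]
end

section
/- Let n > 2 and let V be an indecomposable metric Lie n-algebra that is neither simple nor one-dimensional. Then V possesses a minimal ideal I which is isotropic and satisfies [I, I, V, …, V] = 0; in particular I is abelian. -/
open scoped BigOperators

section AuxLemmas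
variable {n : ℕ} {V : Type*} [AddCommGroup V] [Module ℝ V]

lemma inv'Aux (Φ : V [⋀^Fin n]→ₗ[ℝ] V) (b : LinearMap.BilinForm ℝ V)
    (hinv : IsInvariantN Φ b) (y : Fin n → V) (i : Fin n) (z : V) :
    b (Φ y) z = - b (Φ (Function.update y i z)) (y i) := by
  have h := hinv y i (y i) z
  rwa [Function.update_eq_self] at h

lemma mem_perpN {b : LinearMap.BilinForm ℝ V} {W : Submodule ℝ V} {v : V} :
    v ∈ perpN b W ↔ ∀ w ∈ W, b v w = 0 := Iff.rfl

lemma perp_idealAux (Φ : V [⋀^Fin n]→ₗ[ℝ] V) (b : LinearMap.BilinForm ℝ V)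
    (hsymm : IsSymmN b) (hinv : IsInvariantN Φ b) (I : Submodule ℝ V)
    (hI : IsIdealN Φ I) : IsIdealN Φ (perpN b I) := by
  intro y i hyi
  rw [mem_perpN]
  intro w hw
  have h2 : Φ (Function.update y i w) ∈ I := by
    apply hI _ i
    rw [Function.update_self]; exact hw
  rw [inv'Aux Φ b hinv y i w, hsymm, hyi _ h2, neg_zero]

lemma vanishAux (Φ : V [⋀^Fin n]→ₗ[ℝ] V) (b : LinearMap.BilinForm ℝ V)
    (hnd : IsNondegN b) (hinv : IsInvariantN Φ b) (I : Submodule ℝ V)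
    (hI : IsIdealN Φ I) (hiso : I ≤ perpN b I)
    (y : Fin n → V) (i j : Fin n) (hij : i ≠ j) (hyi : y i ∈ I) (hyj : y j ∈ I) :
    Φ y = 0 := by
  apply hnd
  intro z
  have h2 : Φ (Function.update y i z) ∈ I := by
    apply hI _ j
    rw [Function.update_of_ne (Ne.symm hij)]; exact hyj
  rw [inv'Aux Φ b hinv y i z, hiso h2 _ hyi, neg_zero]

lemma exists_minimal_idealAux [FiniteDimensional ℝ V] (Φ : V [⋀^Fin n]→ₗ[ℝ] V) :
    ∀ (k : ℕ) (I : Submodule ℝ V), Module.finrank ℝ I ≤ k → IsIdealN Φ I → I ≠ ⊥ →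
      ∃ M : Submodule ℝ V, IsIdealN Φ M ∧ M ≠ ⊥ ∧ M ≤ I ∧
        ∀ J : Submodule ℝ V, IsIdealN Φ J → J ≤ M → J = ⊥ ∨ J = M := by
  intro k
  induction k with
  | zero =>
    intro I hle hI hne
    exact absurd (Submodule.finrank_eq_zero.mp (Nat.le_zero.mp hle)) hne
  | succ k ih =>
    intro I hle hI hne
    by_cases h : ∀ J : Submodule ℝ V, IsIdealN Φ J → J ≤ I → J = ⊥ ∨ J = I
    · exact ⟨I, hI, hne, le_rfl, h⟩
    · push_neg at h
      obtain ⟨J, hJid, hJle, hJbot, hJI⟩ := h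
      have hlt : J < I := lt_of_le_of_ne hJle hJI
      have hfr : Module.finrank ℝ J < Module.finrank ℝ I :=
        Submodule.finrank_lt_finrank_of_lt hlt
      obtain ⟨M, hM1, hM2, hM3, hM4⟩ := ih J (by omega) hJid hJbot
      exact ⟨M, hM1, hM2, hM3.trans hJle, hM4⟩

lemma isComplAux [FiniteDimensional ℝ V] (b : LinearMap.BilinForm ℝ V)
    (hsymm : IsSymmN b) (I : Submodule ℝ V)
    (hdisj : I ⊓ perpN b I = ⊥) : IsCompl I (perpN b I) := by
  have hrefl : b.IsRefl := fun x y h => by rw [hsymm]; exact h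
  have heq : perpN b I = b.orthogonal I := by
    ext v
    simp only [mem_perpN, LinearMap.BilinForm.mem_orthogonal_iff]
    constructor
    · intro h w hw; exact hrefl _ _ (h w hw)
    · intro h w hw; exact hrefl _ _ (h w hw)
  rw [heq, LinearMap.BilinForm.isCompl_orthogonal_iff_disjoint hrefl,
    disjoint_iff, ← heq, hdisj]

end AuxLemmas


/-- an indecomposable metric Lie `n`-algebra (`n > 2`) which is
neither simple nor one-dimensional possesses a minimal ideal `I` which is
isotropic and satisfies `[I,I,V,…,V] = 0`; in particular `I` is abelian. -/
theorem indecomposable_has_isotropic_minimal_ideal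
    (n : ℕ) (hn : 2 < n) (V : Type*) [AddCommGroup V] [Module ℝ V]
    [FiniteDimensional ℝ V]
    (Φ : V [⋀^Fin n]→ₗ[ℝ] V) (hΦ : IsNJacobi Φ)
    (b : LinearMap.BilinForm ℝ V)
    (hsymm : IsSymmN b) (hnd : IsNondegN b) (hinv : IsInvariantN Φ b)
    (hind : IsIndecomposableN Φ b)
    (hnotsimple : ¬ IsSimpleN Φ) (hnotone : Module.finrank ℝ V ≠ 1) :
    ∃ I : Submodule ℝ V, IsIdealN Φ I ∧ I ≠ ⊥ ∧
      (∀ J : Submodule ℝ V, IsIdealN Φ J → J ≤ I → J = ⊥ ∨ J = I) ∧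
      I ≤ perpN b I ∧
      (∀ (y : Fin n → V) (i j : Fin n), i ≠ j → y i ∈ I → y j ∈ I → Φ y = 0) ∧
      (∀ y : Fin n → V, (∀ i, y i ∈ I) → Φ y = 0) := by
  have hfr2 : 1 < Module.finrank ℝ V := by
    have h1 := hind.1; omega
  have i0 : Fin n := ⟨0, by omega⟩
  have hex : ∃ I₀ : Submodule ℝ V, IsIdealN Φ I₀ ∧ I₀ ≠ ⊥ ∧ I₀ ≠ ⊤ := by
    unfold IsSimpleN at hnotsimple
    push_neg at hnotsimple
    obtain ⟨I₀, hid, hne1, hne2⟩ := hnotsimple hfr2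
    exact ⟨I₀, hid, hne1, hne2⟩
  obtain ⟨I₀, hI₀id, hI₀bot, hI₀top⟩ := hex
  obtain ⟨I, hIid, hIbot, hIle, hImin⟩ :=
    exists_minimal_idealAux Φ (Module.finrank ℝ I₀) I₀ le_rfl hI₀id hI₀bot
  have hItop : I ≠ ⊤ := fun h => hI₀top (top_le_iff.mp (h ▸ hIle))
  have hPid : IsIdealN Φ (perpN b I) := perp_idealAux Φ b hsymm hinv I hIid
  have hKid : IsIdealN Φ (I ⊓ perpN b I) := by
    intro y i hyi
    exact Submodule.mem_inf.mpr ⟨hIid y i (Submodule.mem_inf.mp hyi).1,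
      hPid y i (Submodule.mem_inf.mp hyi).2⟩
  have hiso : I ≤ perpN b I := by
    rcases hImin _ hKid inf_le_left with hK | hK
    · exfalso
      apply hind.2
      have hcompl : IsCompl I (perpN b I) := isComplAux b hsymm I hK
      have hPbot : perpN b I ≠ ⊥ := by
        intro hP
        have hsup := hcompl.sup_eq_top
        rw [hP, sup_bot_eq] at hsup
        exact hItop hsup
      refine ⟨I, perpN b I, hIbot, hPbot, hcompl, ?_, ?_, ?_, ?_⟩
      · intro y hy; exact hIid y i0 (hy i0)
      · intro y hy; exact hPid y i0 (hy i0)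
      · intro v hv w hw
        rw [hsymm]
        exact hw v hv
      · intro y i j hij hyi hyj
        have hmem : Φ y ∈ I ⊓ perpN b I :=
          Submodule.mem_inf.mpr ⟨hIid y i hyi, hPid y j hyj⟩
        rw [hK] at hmem
        exact hmem
    · exact (le_of_eq hK.symm).trans inf_le_right
  refine ⟨I, hIid, hIbot, hImin, hiso,
    fun y i j hij hyi hyj => vanishAux Φ b hnd hinv I hIid hiso y i j hij hyi hyj, ?_⟩
  intro y hy
  exact vanishAux Φ b hnd hinv I hIid hiso y ⟨0, by omega⟩ ⟨1, by omega⟩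
    (by simp [Fin.ext_iff]) (hy _) (hy _)
end
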